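/- For every natural number n ≥ 1, the sum over i from 1 to ⌊log₂ n⌋ + 1 of ⌊n/2^i − 1/2⌋ (equivalently, of ⌊(n − 2^{i−1}) / 2^i⌋) equals n − ⌊log₂ n⌋ − 1. -/

import Mathlib

lemma aux_half (n m c : ℕ) : (n - 2 * m) / (2 * c) = (n / 2 - m) / c := by
  rw [← Nat.div_div_eq_div_mul]
  congr 1
  omega

lemma aux_sum (n : ℕ) (hn : 1 ≤ n) :
    ∑ j ∈ Finset.range (Nat.log 2 n + 1), (n - 2 ^ j) / 2 ^ (j + 1)
      = n - Nat.log 2 n - 1 := by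
  induction n using Nat.strong_induction_on with
  | _ n ih =>
    rcases Nat.lt_or_ge n 2 with h2 | h2
    · interval_cases n
      simp
    · have hm : 1 ≤ n / 2 := by omega
      have hlog : Nat.log 2 n = Nat.log 2 (n / 2) + 1 := by
        rw [Nat.log_div_base]
        have : 1 ≤ Nat.log 2 n := Nat.log_pos (by norm_num) h2
        omega
      have ihm := ih (n / 2) (by omega) hm
      rw [hlog, Finset.sum_range_succ']
      have hterm : ∀ j, (n - 2 ^ (j + 1)) / 2 ^ (j + 1 + 1)
          = (n / 2 - 2 ^ j) / 2 ^ (j + 1) := by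
        intro j
        rw [show (2:ℕ)^(j+1) = 2*2^j from by ring,
          show (2:ℕ)^(j+1+1) = 2*(2*2^j) from by ring, aux_half]
      simp only [hterm]
      rw [ihm]
      have hlog2 : Nat.log 2 (n / 2) < n / 2 := Nat.log_lt_self 2 (by omega)
      simp only [pow_zero, pow_one]
      omega

theorem sum_floor_shifted_div_two_pow (n : ℕ) (hn : 1 ≤ n) :
    ∑ i ∈ Finset.Icc 1 (Nat.log 2 n + 1), (n - 2 ^ (i - 1)) / 2 ^ i
      = n - Nat.log 2 n - 1 := by
  rw [← Finset.Ico_add_one_right_eq_Icc, Finset.sum_Ico_eq_sum_range]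
  have h : ∀ j, (n - 2 ^ (1 + j - 1)) / 2 ^ (1 + j) = (n - 2 ^ j) / 2 ^ (j + 1) := by
    intro j
    rw [show 1 + j - 1 = j from by omega, show 1 + j = j + 1 from by omega]
  simp only [Nat.add_sub_cancel, h]
  exact aux_sum n hn
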